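/- Let 𝒦 be a coherent set of desirable gamble sets. For finitely many A₁,…,Aₙ ∈ 𝒦, let 𝔻_{A₁,…,Aₙ} be the set of coherent D such that there exists (g₁,…,gₙ) ∈ A₁×…×Aₙ with 0 ∉ desext({g₁,…,gₙ}) and D ⊇ desext({g₁,…,gₙ}). Then each 𝔻_{A₁,…,Aₙ} is nonempty, and 𝔻_{A₁,…,A_{n₁}} ∩ 𝔻_{C₁,…,C_{n₂}} ⊇ 𝔻_{A₁,…,A_{n₁},C₁,…,C_{n₂}}. -/

import Mathlib

open scoped BigOperators

universe u v

def GambleSpace (Ω : Type v) : Submodule ℝ (Ω → ℝ) where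
  carrier := {f | ∃ M, ∀ ω, |f ω| ≤ M}
  add_mem' := by
    rintro f g ⟨M, hM⟩ ⟨N, hN⟩
    exact ⟨M + N, fun ω => (abs_add_le _ _).trans (add_le_add (hM ω) (hN ω))⟩
  zero_mem' := ⟨0, fun ω => by simp⟩
  smul_mem' := by
    rintro c f ⟨M, hM⟩
    exact ⟨|c| * M, fun ω => by
      simpa [abs_mul] using mul_le_mul_of_nonneg_left (hM ω) (abs_nonneg c)⟩

/-- The type of gambles: bounded functions `Ω → ℝ`. -/
abbrev Gamble (Ω : Type v) := GambleSpace Ω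

/-- Pointwise order on gambles: `gle f g` means `f ≤ g` pointwise. -/
def gle {Ω : Type v} (f g : Gamble Ω) : Prop := ∀ ω, (f : Ω → ℝ) ω ≤ (g : Ω → ℝ) ω

/-- Gambles weakly dominating `0`. -/
def Gpos (Ω : Type v) : Set (Gamble Ω) := {g | gle 0 g ∧ g ≠ 0}

/-- Positive linear hull: finite positive combinations of members of `B`. -/
def posi {Ω : Type v} (B : Set (Gamble Ω)) : Set (Gamble Ω) :=
  {f | ∃ n : ℕ, 0 < n ∧ ∃ (l : Fin n → ℝ) (g : Fin n → Gamble Ω),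
    (∀ i, 0 < l i) ∧ (∀ i, g i ∈ B) ∧ f = ∑ i, l i • g i}

/-- Natural extension of a set of gambles. -/
def desext {Ω : Type v} (E : Set (Gamble Ω)) : Set (Gamble Ω) := posi (E ∪ Gpos Ω)

/-- Coherence for a set of desirable gambles. -/
def CoherentD {Ω : Type v} (D : Set (Gamble Ω)) : Prop :=
  (0 : Gamble Ω) ∉ D ∧ Gpos Ω ⊆ D ∧
  (∀ g ∈ D, ∀ l : ℝ, 0 < l → l • g ∈ D) ∧
  (∀ f ∈ D, ∀ g ∈ D, f + g ∈ D)

/-- Coherence for a set of desirable gamble sets. -/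
def CoherentK {Ω : Type v} (K : Set (Set (Gamble Ω))) : Prop :=
  (∅ : Set (Gamble Ω)) ∉ K ∧
  (∀ A ∈ K, A \ {0} ∈ K) ∧
  (∀ g ∈ Gpos Ω, ({g} : Set (Gamble Ω)) ∈ K) ∧
  (∀ A ∈ K, ∀ B : Set (Gamble Ω), A ⊆ B → B ∈ K) ∧
  (∀ A ∈ K, ∀ F : Gamble Ω → Gamble Ω, (∀ g ∈ A, gle g (F g)) → F '' A ∈ K) ∧
  (∀ n : ℕ, 0 < n → ∀ A : Fin n → Set (Gamble Ω), (∀ i, A i ∈ K) →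
    ∀ F : (Fin n → Gamble Ω) → Gamble Ω,
    (∀ g : Fin n → Gamble Ω, (∀ i, g i ∈ A i) → F g ∈ posi (Set.range g)) →
    {b | ∃ g : Fin n → Gamble Ω, (∀ i, g i ∈ A i) ∧ b = F g} ∈ K)

/-- The infinite addition axiom. -/
def KAddInf {Ω : Type v} (K : Set (Set (Gamble Ω))) : Prop :=
  ∀ (I : Type v) (A : I → Set (Gamble Ω)), (∀ i, A i ∈ K) →
    ∀ F : (I → Gamble Ω) → Gamble Ω,
    (∀ g : I → Gamble Ω, (∀ i, g i ∈ A i) → F g ∈ posi (Set.range g)) →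
    {b | ∃ g : I → Gamble Ω, (∀ i, g i ∈ A i) ∧ b = F g} ∈ K

/-- Natural extension of a set of gamble sets (nonempty case). -/
def ExtK {Ω : Type v} (𝒜 : Set (Set (Gamble Ω))) : Set (Set (Gamble Ω)) :=
  {B | ∃ n : ℕ, 0 < n ∧ ∃ A : Fin n → Set (Gamble Ω), (∀ i, A i ∈ 𝒜) ∧
    ∀ g : Fin n → Gamble Ω, (∀ i, g i ∈ A i) →
      (0 : Gamble Ω) ∉ desext (Set.range g) → ∃ f ∈ B, f ∈ desext (Set.range g)}

/-- The set `𝔻_{A₁,…,Aₙ}` of coherent `D` extending `desext {g₁,…,gₙ}` for some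
compatible selection `(g₁,…,gₙ) ∈ A₁ × … × Aₙ`. -/
def DD {Ω : Type v} {n : ℕ} (A : Fin n → Set (Gamble Ω)) : Set (Set (Gamble Ω)) :=
  {D | CoherentD D ∧ ∃ g : Fin n → Gamble Ω, (∀ i, g i ∈ A i) ∧
    (0 : Gamble Ω) ∉ desext (Set.range g) ∧ desext (Set.range g) ⊆ D}


open Classical in
lemma sum_mem_posi {Ω : Type v} {B : Set (Gamble Ω)} {ι : Type*} (s : Finset ι)
    (hs : s.Nonempty) (l : ι → ℝ) (g : ι → Gamble Ω)
    (hl : ∀ i ∈ s, 0 < l i) (hg : ∀ i ∈ s, g i ∈ B) :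
    (∑ i ∈ s, l i • g i) ∈ posi B := by
  refine ⟨s.card, Finset.card_pos.mpr hs,
    fun j => l (s.equivFin.symm j), fun j => g (s.equivFin.symm j),
    fun j => hl _ (s.equivFin.symm j).2, fun j => hg _ (s.equivFin.symm j).2, ?_⟩
  rw [← Finset.sum_coe_sort s (fun i => l i • g i)]
  exact Fintype.sum_equiv s.equivFin (fun x => l x • g x)
    (fun j => l (s.equivFin.symm j) • g (s.equivFin.symm j)) (fun x => by simp)

lemma posi_mono {Ω : Type v} {B C : Set (Gamble Ω)} (h : B ⊆ C) : posi B ⊆ posi C := by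
  rintro f ⟨n, hn, l, g, hl, hg, rfl⟩
  exact ⟨n, hn, l, g, hl, fun i => h (hg i), rfl⟩

lemma coe_eval_sum {Ω : Type v} {ι : Type*} (s : Finset ι) (l : ι → ℝ) (g : ι → Gamble Ω)
    (ω : Ω) : ((∑ i ∈ s, l i • g i : Gamble Ω) : Ω → ℝ) ω = ∑ i ∈ s, l i * (g i : Ω → ℝ) ω := by
  rw [AddSubmonoidClass.coe_finset_sum]
  simp [Finset.sum_apply]

lemma posi_Gpos {Ω : Type v} : posi (Gpos Ω) ⊆ Gpos Ω := by
  rintro f ⟨n, hn, l, g, hl, hg, rfl⟩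
  have hnn : ∀ ω, (0:ℝ) ≤ ((∑ i, l i • g i : Gamble Ω) : Ω → ℝ) ω := by
    intro ω
    rw [coe_eval_sum]
    exact Finset.sum_nonneg fun i _ => mul_nonneg (hl i).le ((hg i).1 ω)
  refine ⟨fun ω => by simpa using hnn ω, ?_⟩
  intro h0
  obtain ⟨i0⟩ : Nonempty (Fin n) := ⟨⟨0, hn⟩⟩
  have hne := (hg i0).2
  have : ∃ ω, (g i0 : Ω → ℝ) ω ≠ 0 := by
    by_contra hc
    push_neg at hc
    exact hne (Subtype.ext (funext hc))
  obtain ⟨ω, hω⟩ := this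
  have hpos : 0 < (g i0 : Ω → ℝ) ω := lt_of_le_of_ne (by simpa using (hg i0).1 ω) (Ne.symm hω)
  have hle : l i0 * (g i0 : Ω → ℝ) ω ≤ ((∑ i, l i • g i : Gamble Ω) : Ω → ℝ) ω := by
    rw [coe_eval_sum]
    exact Finset.single_le_sum (fun i _ => mul_nonneg (hl i).le ((hg i).1 ω)) (Finset.mem_univ i0)
  rw [h0] at hle
  simp at hle
  exact absurd hle (not_le.mpr (mul_pos (hl i0) hpos))

open Classical in
lemma exists_neg_of_zero_mem_desext {Ω : Type v} {E : Set (Gamble Ω)}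
    (h : (0 : Gamble Ω) ∈ desext E) : ∃ f ∈ posi E, gle f 0 := by
  obtain ⟨m, hm, l, g, hl, hg, heq⟩ := h
  set S : Finset (Fin m) := Finset.univ.filter (fun i => g i ∈ E) with hS
  have hSne : S.Nonempty := by
    by_contra hc
    rw [Finset.not_nonempty_iff_eq_empty] at hc
    have hall : ∀ i, g i ∈ Gpos Ω := by
      intro i
      rcases hg i with h1 | h2
      · exact absurd (by simp [hS, h1] : i ∈ S) (by simp [hc])
      · exact h2
    have : (0 : Gamble Ω) ∈ Gpos Ω := heq ▸ posi_Gpos ⟨m, hm, l, g, hl, hall, rfl⟩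
    exact this.2 rfl
  refine ⟨∑ i ∈ S, l i • g i, sum_mem_posi S hSne l g (fun i _ => hl i)
    (fun i hi => by simpa [hS] using hi), ?_⟩
  intro ω
  have hsplit : ∑ i ∈ S, l i • g i + ∑ i ∈ Sᶜ, l i • g i = 0 := by
    rw [Finset.sum_add_sum_compl]
    exact heq.symm
  have : ((∑ i ∈ S, l i • g i : Gamble Ω) : Ω → ℝ) ω
      = -((∑ i ∈ Sᶜ, l i • g i : Gamble Ω) : Ω → ℝ) ω := by
    have := congrArg (fun f : Gamble Ω => (f : Ω → ℝ) ω) hsplit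
    simp only [Submodule.coe_add, Pi.add_apply] at this
    simpa [eq_neg_iff_add_eq_zero] using this
  rw [this]
  simp only [ZeroMemClass.coe_zero, Pi.zero_apply]
  rw [neg_nonpos]
  rw [coe_eval_sum]
  refine Finset.sum_nonneg fun i hi => ?_
  have : g i ∈ Gpos Ω := by
    rcases hg i with h1 | h2
    · simp [hS, h1] at hi
    · exact h2
  exact mul_nonneg (hl i).le (by simpa using this.1 ω)

lemma posi_smul {Ω : Type v} {B : Set (Gamble Ω)} {f : Gamble Ω} (hf : f ∈ posi B)
    {c : ℝ} (hc : 0 < c) : c • f ∈ posi B := by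
  obtain ⟨n, hn, l, g, hl, hg, rfl⟩ := hf
  exact ⟨n, hn, fun i => c * l i, g, fun i => mul_pos hc (hl i), hg,
    by rw [Finset.smul_sum]; simp [mul_smul]⟩

lemma posi_add {Ω : Type v} {B : Set (Gamble Ω)} {f f' : Gamble Ω}
    (hf : f ∈ posi B) (hf' : f' ∈ posi B) : f + f' ∈ posi B := by
  obtain ⟨n, hn, l, g, hl, hg, rfl⟩ := hf
  obtain ⟨m, hm, l', g', hl', hg', rfl⟩ := hf'
  have := sum_mem_posi (B := B) (Finset.univ : Finset (Fin n ⊕ Fin m))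
    ⟨Sum.inl ⟨0, hn⟩, Finset.mem_univ _⟩ (Sum.elim l l') (Sum.elim g g')
    (by rintro (i | i) _ <;> [exact hl i; exact hl' i])
    (by rintro (i | i) _ <;> [exact hg i; exact hg' i])
  simpa [Fintype.sum_sum_type] using this

lemma mem_posi_of_mem {Ω : Type v} {B : Set (Gamble Ω)} {f : Gamble Ω} (hf : f ∈ B) :
    f ∈ posi B :=
  ⟨1, one_pos, fun _ => 1, fun _ => f, fun _ => one_pos, fun _ => hf, by simp⟩

lemma coherentD_desext {Ω : Type v} {E : Set (Gamble Ω)}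
    (h0 : (0 : Gamble Ω) ∉ desext E) : CoherentD (desext E) :=
  ⟨h0, fun g hg => mem_posi_of_mem (Or.inr hg),
    fun g hg l hl => posi_smul hg hl, fun f hf g hg => posi_add hf hg⟩

lemma desext_mono {Ω : Type v} {E E' : Set (Gamble Ω)} (h : E ⊆ E') :
    desext E ⊆ desext E' :=
  posi_mono (Set.union_subset_union_left _ h)

theorem stmt16 {Ω : Type v} [Nonempty Ω] (K : Set (Set (Gamble Ω))) (hK : CoherentK K) :
    (∀ n : ℕ, 0 < n → ∀ A : Fin n → Set (Gamble Ω), (∀ i, A i ∈ K) →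
      (DD A).Nonempty) ∧
    (∀ (n₁ n₂ : ℕ), 0 < n₁ → 0 < n₂ →
      ∀ (A : Fin n₁ → Set (Gamble Ω)) (C : Fin n₂ → Set (Gamble Ω)),
      (∀ i, A i ∈ K) → (∀ i, C i ∈ K) →
      DD (Fin.append A C) ⊆ DD A ∩ DD C) := by
  constructor
  · intro n hn A hA
    by_cases hcase : ∃ g : Fin n → Gamble Ω, (∀ i, g i ∈ A i) ∧
        (0 : Gamble Ω) ∉ desext (Set.range g)
    · obtain ⟨g, hg, h0⟩ := hcase
      exact ⟨desext (Set.range g), coherentD_desext h0, g, hg, h0, subset_rfl⟩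
    · exfalso
      push_neg at hcase
      classical
      set F : (Fin n → Gamble Ω) → Gamble Ω := fun g =>
        if h : ∃ f ∈ posi (Set.range g), gle f 0 then h.choose else 0 with hFdef
      have hF : ∀ g : Fin n → Gamble Ω, (∀ i, g i ∈ A i) →
          F g ∈ posi (Set.range g) ∧ gle (F g) 0 := by
        intro g hg
        have hex := exists_neg_of_zero_mem_desext (hcase g hg)
        rw [hFdef]
        simp only [dif_pos hex]
        exact ⟨hex.choose_spec.1, hex.choose_spec.2⟩
      have hB := hK.2.2.2.2.2 n hn A hA F (fun g hg => (hF g hg).1)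
      set B := {b | ∃ g : Fin n → Gamble Ω, (∀ i, g i ∈ A i) ∧ b = F g} with hBdef
      have hBne : B.Nonempty := by
        have hAne : ∀ i, (A i).Nonempty := by
          intro i
          rcases Set.eq_empty_or_nonempty (A i) with h | h
          · exact absurd (h ▸ hA i) hK.1
          · exact h
        choose g0 hg0 using hAne
        exact ⟨F g0, g0, hg0, rfl⟩
      have hzero := hK.2.2.2.2.1 B hB (fun _ => 0) (by
        rintro b ⟨g, hg, rfl⟩
        exact (hF g hg).2)
      rw [Set.Nonempty.image_const hBne] at hzero
      have := hK.2.1 _ hzero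
      simp at this
      exact hK.1 this
  · intro n₁ n₂ h1 h2 A C hA hC D hD
    obtain ⟨hcoh, g, hg, h0, hsub⟩ := hD
    constructor
    · refine ⟨hcoh, fun i => g (Fin.castAdd n₂ i), fun i => ?_, ?_, ?_⟩
      · have := hg (Fin.castAdd n₂ i)
        rwa [Fin.append_left] at this
      · intro hc
        exact h0 (desext_mono (by rintro _ ⟨i, rfl⟩; exact ⟨_, rfl⟩) hc)
      · exact (desext_mono (by rintro _ ⟨i, rfl⟩; exact ⟨_, rfl⟩)).trans hsub
    · refine ⟨hcoh, fun i => g (Fin.natAdd n₁ i), fun i => ?_, ?_, ?_⟩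
      · have := hg (Fin.natAdd n₁ i)
        rwa [Fin.append_right] at this
      · intro hc
        exact h0 (desext_mono (by rintro _ ⟨i, rfl⟩; exact ⟨_, rfl⟩) hc)
      · exact (desext_mono (by rintro _ ⟨i, rfl⟩; exact ⟨_, rfl⟩)).trans hsub
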